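/- Let K and L be compact Hausdorff spaces and φ : K → L a continuous surjective map. If K has the extension property and L is scattered of finite height, then φ admits an averaging operator, i.e., there is a bounded linear operator P : C(K) → C(L) with P ∘ φ* = id on C(L); equivalently, the Banach subalgebra φ*C(L) of C(K) is complemented in C(K). -/

import Mathlib

open Filter Topology
open scoped ZeroAtInfty

noncomputable section

/-- `E` is an extension operator for the closed set `F` in `K`. -/
def IsExtensionOperator {K : Type*} [TopologicalSpace K] (F : Set K)
    (E : C(↥F, ℝ) →L[ℝ] C(K, ℝ)) : Prop :=
  ∀ f : C(↥F, ℝ), (E f).restrict F = f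

/-- `F` admits an extension operator in `K`. -/
def HasExtensionOperator {K : Type*} [TopologicalSpace K] (F : Set K) : Prop :=
  ∃ E : C(↥F, ℝ) →L[ℝ] C(K, ℝ), IsExtensionOperator F E

/-- `K` has the extension property. -/
def HasExtensionProperty (K : Type*) [TopologicalSpace K] : Prop :=
  ∀ F : Set K, F.Nonempty → IsClosed F → HasExtensionOperator F

/-- `F` admits a regular extension operator in `K`. -/
def HasRegularExtensionOperator {K : Type*} [TopologicalSpace K] [CompactSpace K]
    (F : Set K) (hF : IsClosed F) : Prop :=
  haveI : CompactSpace ↥F := isCompact_iff_compactSpace.mp hF.isCompact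
  ∃ E : C(↥F, ℝ) →L[ℝ] C(K, ℝ), IsExtensionOperator F E ∧ ‖E‖ ≤ 1 ∧ E 1 = 1

/-- `K` has the regular extension property. -/
def HasRegularExtensionProperty (K : Type*) [TopologicalSpace K] [CompactSpace K] : Prop :=
  ∀ F : Set K, F.Nonempty → ∀ hF : IsClosed F, HasRegularExtensionOperator F hF

/-- The submodule `C(K|G)` of `C(K, ℝ)` of functions vanishing on `G`. -/
def vanishingSubmodule {K : Type*} [TopologicalSpace K] (G : Set K) :
    Submodule ℝ C(K, ℝ) where
  carrier := {f | ∀ x ∈ G, f x = 0}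
  add_mem' := by intro f g hf hg x hx; simp [hf x hx, hg x hx]
  zero_mem' := by intro x hx; simp
  smul_mem' := by intro c f hf x hx; simp [hf x hx]

/-- The canonical basis vector of `c₀(I)`: the characteristic function of `{i}`. -/
def c0Single {I : Type*} [TopologicalSpace I] [DiscreteTopology I] (i : I) : C₀(I, ℝ) :=
  letI := Classical.decEq I
  { toFun := fun j => if j = i then (1 : ℝ) else 0
    continuous_toFun := continuous_of_discreteTopology
    zero_at_infty' := by
      have h : (fun j => if j = i then (1 : ℝ) else 0) =ᶠ[Filter.cocompact I] (fun _ => 0) := by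
        filter_upwards [Filter.mem_cocompact.mpr ⟨{i}, isCompact_singleton, subset_rfl⟩] with j hj
        simp only [Set.mem_compl_iff, Set.mem_singleton_iff] at hj
        simp [hj]
      exact Filter.Tendsto.congr' h.symm tendsto_const_nhds }

/-- `X` satisfies the countable chain condition. -/
def CountableChainCondition (X : Type*) [TopologicalSpace X] : Prop :=
  ∀ 𝒰 : Set (Set X), (∀ U ∈ 𝒰, IsOpen U ∧ U.Nonempty) → 𝒰.Pairwise Disjoint → 𝒰.Countable


/-- Restriction as a continuous linear map, on compact spaces. -/
def restrictCLM (K : Type*) [TopologicalSpace K] [CompactSpace K] (F : Set K)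
    [CompactSpace ↥F] : C(K, ℝ) →L[ℝ] C(↥F, ℝ) :=
  LinearMap.mkContinuous
    { toFun := fun f => f.restrict F
      map_add' := fun f g => rfl
      map_smul' := fun c f => rfl } 1
    (fun f => by
      rw [one_mul]
      refine (ContinuousMap.norm_le _ (norm_nonneg f)).mpr (fun x => ?_)
      exact f.norm_coe_le_norm x)

@[simp] lemma restrictCLM_apply (K : Type*) [TopologicalSpace K] [CompactSpace K] (F : Set K)
    [CompactSpace ↥F] (f : C(K, ℝ)) : restrictCLM K F f = f.restrict F := rfl

/-- Precomposition as a continuous linear map, on compact spaces. -/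
def compCLM {X Y : Type*} [TopologicalSpace X] [CompactSpace X] [TopologicalSpace Y]
    [CompactSpace Y] (θ : C(X, Y)) : C(Y, ℝ) →L[ℝ] C(X, ℝ) :=
  LinearMap.mkContinuous
    { toFun := fun f => f.comp θ
      map_add' := fun f g => rfl
      map_smul' := fun c f => rfl } 1
    (fun f => by
      rw [one_mul]
      refine (ContinuousMap.norm_le _ (norm_nonneg f)).mpr (fun x => ?_)
      exact f.norm_coe_le_norm (θ x))

@[simp] lemma compCLM_apply {X Y : Type*} [TopologicalSpace X] [CompactSpace X]
    [TopologicalSpace Y] [CompactSpace Y] (θ : C(X, Y)) (f : C(Y, ℝ)) :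
    compCLM θ f = f.comp θ := rfl

/-- Composition with a section of `φ` is continuous provided the function is constant on
fibers over the derived set of `L`. -/
lemma continuous_comp_section {K L : Type*} [TopologicalSpace K] [CompactSpace K]
    [TopologicalSpace L] [T2Space L] (φ : C(K, L)) (s : L → K) (hs : ∀ y, φ (s y) = y)
    (h : C(K, ℝ)) (hconst : ∀ y ∈ derivedSet (Set.univ : Set L), ∀ x, φ x = y → h x = h (s y)) :
    Continuous fun y => h (s y) := by
  rw [continuous_iff_continuousAt]
  intro y₀
  by_cases hy₀ : y₀ ∈ derivedSet (Set.univ : Set L)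
  · rw [ContinuousAt, Metric.tendsto_nhds]
    intro ε hε
    set U : Set K := (fun x => dist (h x) (h (s y₀))) ⁻¹' Set.Iio ε with hU
    have hUopen : IsOpen U := (Continuous.dist h.continuous continuous_const).isOpen_preimage _ isOpen_Iio
    have hfiber : ∀ x, φ x = y₀ → x ∈ U := by
      intro x hx
      have := hconst y₀ hy₀ x hx
      simp [hU, this, hε]
    have hVclosed : IsClosed (φ '' Uᶜ) :=
      ((hUopen.isClosed_compl.isCompact).image φ.continuous).isClosed
    have hy₀V : y₀ ∈ (φ '' Uᶜ)ᶜ := by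
      rintro ⟨x, hxU, hxy⟩
      exact hxU (hfiber x hxy)
    filter_upwards [hVclosed.isOpen_compl.mem_nhds hy₀V] with y hy
    have hsyU : s y ∈ U := by
      by_contra hcon
      exact hy ⟨s y, hcon, hs y⟩
    exact hsyU
  · have hsingleton : {y₀} ∈ 𝓝 y₀ := by
      rw [mem_derivedSet, accPt_iff_nhds] at hy₀
      push_neg at hy₀
      obtain ⟨U, hU, hU2⟩ := hy₀
      refine mem_of_superset hU (fun y hy => hU2 y ⟨hy, trivial⟩)
    refine tendsto_const_nhds.congr' ?_
    filter_upwards [hsingleton] with y hy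
    rw [Set.mem_singleton_iff] at hy
    rw [hy]

/-- Build the averaging operator from an operator `A` whose outputs are constant on
fibers over the derived set. -/
lemma exists_avg {K L : Type*} [TopologicalSpace K] [CompactSpace K]
    [TopologicalSpace L] [CompactSpace L] [T2Space L] (φ : C(K, L)) (s : L → K)
    (hs : ∀ y, φ (s y) = y) (A : C(K, ℝ) →L[ℝ] C(K, ℝ))
    (hA : ∀ f : C(K, ℝ), ∀ y ∈ derivedSet (Set.univ : Set L), ∀ x, φ x = y →
      A f x = A f (s y)) :
    ∃ P : C(K, ℝ) →L[ℝ] C(L, ℝ), ∀ (f : C(K, ℝ)) (y : L), P f y = A f (s y) := by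
  refine ⟨LinearMap.mkContinuous
    { toFun := fun f => ⟨fun y => A f (s y), continuous_comp_section φ s hs (A f) (hA f)⟩
      map_add' := fun f g => by ext y; simp
      map_smul' := fun c f => by ext y; simp } (‖A‖) (fun f => ?_), fun f y => rfl⟩
  refine (ContinuousMap.norm_le _ (by positivity)).mpr (fun y => ?_)
  calc ‖A f (s y)‖ ≤ ‖A f‖ := (A f).norm_coe_le_norm (s y)
    _ ≤ ‖A‖ * ‖f‖ := A.le_opNorm f

/-- The canonical homeomorphism between a subset of a subtype and its image. -/
def imageHomeo {K : Type*} [TopologicalSpace K] {C : Set K} (F : Set ↥C) :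
    ↥F ≃ₜ ↥(Subtype.val '' F) where
  toFun z := ⟨(z.1 : K), ⟨z.1, z.2, rfl⟩⟩
  invFun w := ⟨⟨w.1, Subtype.coe_image_subset C F w.2⟩, by
    obtain ⟨z, hzF, hzeq⟩ := w.2
    have h : (⟨w.1, Subtype.coe_image_subset C F w.2⟩ : ↥C) = z := Subtype.ext hzeq.symm
    rw [h]; exact hzF⟩
  left_inv z := Subtype.ext (Subtype.ext rfl)
  right_inv w := Subtype.ext rfl
  continuous_toFun := by
    exact Continuous.subtype_mk (continuous_subtype_val.comp continuous_subtype_val) _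
  continuous_invFun := by
    exact Continuous.subtype_mk (Continuous.subtype_mk continuous_subtype_val _) _

/-- The extension property passes to closed subspaces of compact Hausdorff spaces. -/
lemma HasExtensionProperty.closedSubset {K : Type*} [TopologicalSpace K] [CompactSpace K]
    (hK : HasExtensionProperty K) {C : Set K} (hC : IsClosed C) :
    HasExtensionProperty ↥C := by
  haveI : CompactSpace ↥C := isCompact_iff_compactSpace.mp hC.isCompact
  intro F hFne hFc
  have hF'c : IsClosed (Subtype.val '' F) := hC.isClosedEmbedding_subtypeVal.isClosedMap F hFc
  haveI : CompactSpace ↥F := isCompact_iff_compactSpace.mp hFc.isCompact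
  haveI : CompactSpace ↥(Subtype.val '' F) := isCompact_iff_compactSpace.mp hF'c.isCompact
  obtain ⟨E', hE'⟩ := hK (Subtype.val '' F) (hFne.image _) hF'c
  refine ⟨(restrictCLM K C).comp (E'.comp (compCLM (ContinuousMap.mk (imageHomeo F).symm (imageHomeo F).symm.continuous))), ?_⟩
  intro g
  ext z
  have hmem : ((z : ↥C) : K) ∈ Subtype.val '' F := ⟨z.1, z.2, rfl⟩
  have h1 : (E' (g.comp (ContinuousMap.mk (imageHomeo F).symm (imageHomeo F).symm.continuous))) ((z : ↥C) : K)
      = (g.comp (ContinuousMap.mk (imageHomeo F).symm (imageHomeo F).symm.continuous)) ⟨((z : ↥C) : K), hmem⟩ := by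
    conv_rhs => rw [← hE' (g.comp (ContinuousMap.mk (imageHomeo F).symm (imageHomeo F).symm.continuous))]
    rfl
  have h2 : (imageHomeo F).symm ⟨((z : ↥C) : K), hmem⟩ = z := by
    apply (imageHomeo F).injective
    exact Subtype.ext rfl
  calc _ = (E' (g.comp (ContinuousMap.mk (imageHomeo F).symm (imageHomeo F).symm.continuous))) ((z : ↥C) : K) := rfl
    _ = g ((imageHomeo F).symm ⟨((z : ↥C) : K), hmem⟩) := h1
    _ = g z := by rw [h2]

/-- Height decreases when passing to the derived set as a subspace. -/
lemma height_subtype {L : Type*} [TopologicalSpace L] (m : ℕ)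
    (h : derivedSet^[m + 1] (Set.univ : Set L) = ∅) :
    derivedSet^[m] (Set.univ : Set ↥(derivedSet (Set.univ : Set L))) = ∅ := by
  set M := derivedSet (Set.univ : Set L) with hM
  have key : ∀ k, Subtype.val '' (derivedSet^[k] (Set.univ : Set ↥M))
      ⊆ derivedSet^[k + 1] (Set.univ : Set L) := by
    intro k
    induction k with
    | zero =>
      simp
      exact subset_rfl
    | succ k ih =>
      have e1 : derivedSet^[k + 1] (Set.univ : Set ↥M) = derivedSet (derivedSet^[k] Set.univ) :=
        Function.iterate_succ_apply' _ _ _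
      have e2 : derivedSet^[k + 1 + 1] (Set.univ : Set L)
          = derivedSet (derivedSet^[k + 1] Set.univ) := Function.iterate_succ_apply' _ _ _
      rw [e1, e2]
      exact subset_trans
        (Continuous.image_derivedSet continuous_subtype_val Subtype.val_injective)
        (derivedSet_mono _ _ ih)
  have := key m
  rw [h, Set.subset_empty_iff, Set.image_eq_empty] at this
  exact this

universe u v

theorem key (n : ℕ) : ∀ {K : Type u} {L : Type v} [TopologicalSpace K] [CompactSpace K]
    [T2Space K] [TopologicalSpace L] [CompactSpace L] [T2Space L] (φ : C(K, L)),
    Function.Surjective φ → HasExtensionProperty K →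
    derivedSet^[n] (Set.univ : Set L) = ∅ →
    ∃ P : C(K, ℝ) →L[ℝ] C(L, ℝ), ∀ f : C(L, ℝ), P (f.comp φ) = f := by
  induction n with
  | zero =>
    intro K L _ _ _ _ _ _ φ hφ hK hL
    rw [Function.iterate_zero_apply] at hL
    have : IsEmpty L := Set.univ_eq_empty_iff.mp hL
    exact ⟨0, fun f => by ext y; exact isEmptyElim y⟩
  | succ m IH =>
    intro K L _ _ _ _ _ _ φ hφ hK hL
    choose s hs using hφ
    by_cases hMne : (derivedSet (Set.univ : Set L)).Nonempty
    · -- main case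
      have hMc : IsClosed (derivedSet (Set.univ : Set L)) := isClosed_derivedSet _
      have hK'c : IsClosed (φ ⁻¹' (derivedSet (Set.univ : Set L))) := hMc.preimage φ.continuous
      haveI : CompactSpace ↥(φ ⁻¹' (derivedSet (Set.univ : Set L))) :=
        isCompact_iff_compactSpace.mp hK'c.isCompact
      haveI : CompactSpace ↥(derivedSet (Set.univ : Set L)) :=
        isCompact_iff_compactSpace.mp hMc.isCompact
      let φ' : C(↥(φ ⁻¹' (derivedSet (Set.univ : Set L))), ↥(derivedSet (Set.univ : Set L))) :=
        ⟨fun x => ⟨φ x, x.2⟩, by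
          exact Continuous.subtype_mk (φ.continuous.comp continuous_subtype_val) _⟩
      have hφ' : Function.Surjective φ' := by
        intro y
        obtain ⟨x, hx⟩ := (fun y => ⟨s y, hs y⟩ : Function.Surjective φ) (y : L)
        exact ⟨⟨x, by rw [Set.mem_preimage, hx]; exact y.2⟩, Subtype.ext hx⟩
      obtain ⟨P', hP'⟩ := IH φ' hφ' (hK.closedSubset hK'c) (height_subtype m hL)
      have hK'ne : (φ ⁻¹' (derivedSet (Set.univ : Set L))).Nonempty := by
        obtain ⟨y, hy⟩ := hMne
        exact ⟨s y, by rw [Set.mem_preimage, hs y]; exact hy⟩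
      obtain ⟨E, hE⟩ := hK _ hK'ne hK'c
      set A : C(K, ℝ) →L[ℝ] C(K, ℝ) :=
        E.comp ((compCLM φ').comp (P'.comp
            (restrictCLM K (φ ⁻¹' (derivedSet (Set.univ : Set L)))))) +
          (ContinuousLinearMap.id ℝ C(K, ℝ) - E.comp
            (restrictCLM K (φ ⁻¹' (derivedSet (Set.univ : Set L))))) with hAdef
      have hEval : ∀ (g : C(↥(φ ⁻¹' (derivedSet (Set.univ : Set L))), ℝ)) (x : K)
          (hx : x ∈ φ ⁻¹' (derivedSet (Set.univ : Set L))), E g x = g ⟨x, hx⟩ := by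
        intro g x hx
        conv_rhs => rw [← hE g]
        rfl
      have hAin : ∀ (f : C(K, ℝ)) (x : K) (hx : x ∈ φ ⁻¹' (derivedSet (Set.univ : Set L))),
          A f x = P' (f.restrict _) (φ' ⟨x, hx⟩) := by
        intro f x hx
        simp only [hAdef, ContinuousLinearMap.add_apply, ContinuousLinearMap.sub_apply,
          ContinuousLinearMap.comp_apply, ContinuousLinearMap.id_apply, restrictCLM_apply,
          compCLM_apply, ContinuousMap.add_apply, ContinuousMap.sub_apply]
        rw [hEval _ x hx, hEval _ x hx]
        simp
      have hA : ∀ f : C(K, ℝ), ∀ y ∈ derivedSet (Set.univ : Set L), ∀ x, φ x = y →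
          A f x = A f (s y) := by
        intro f y hy x hxy
        have hx : x ∈ φ ⁻¹' (derivedSet (Set.univ : Set L)) := by
          rw [Set.mem_preimage, hxy]; exact hy
        have hsy : s y ∈ φ ⁻¹' (derivedSet (Set.univ : Set L)) := by
          rw [Set.mem_preimage, hs y]; exact hy
        rw [hAin f x hx, hAin f (s y) hsy]
        congr 1
        apply Subtype.ext
        show φ x = φ (s y)
        rw [hxy, hs y]
      obtain ⟨P, hP⟩ := exists_avg φ s hs A hA
      refine ⟨P, fun f => ?_⟩
      have hr : (f.comp φ).restrict (φ ⁻¹' (derivedSet (Set.univ : Set L)))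
          = (f.restrict (derivedSet (Set.univ : Set L))).comp φ' := by ext x; rfl
      have hAf : A (f.comp φ) = f.comp φ := by
        simp only [hAdef, ContinuousLinearMap.add_apply, ContinuousLinearMap.sub_apply,
          ContinuousLinearMap.comp_apply, ContinuousLinearMap.id_apply, restrictCLM_apply,
          compCLM_apply]
        rw [hr, hP' (f.restrict (derivedSet (Set.univ : Set L))), ← hr]
        abel
      ext y
      rw [hP, hAf]
      show f (φ (s y)) = f y
      rw [hs y]
    · obtain ⟨P, hP⟩ := exists_avg φ s hs (ContinuousLinearMap.id ℝ C(K, ℝ))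
        (fun f y hy => absurd ⟨y, hy⟩ hMne)
      refine ⟨P, fun f => ?_⟩
      ext y
      rw [hP]
      show f (φ (s y)) = f y
      rw [hs y]

theorem stmt3 {K L : Type*} [TopologicalSpace K] [CompactSpace K] [T2Space K]
    [TopologicalSpace L] [CompactSpace L] [T2Space L]
    (φ : C(K, L)) (hφ : Function.Surjective φ)
    (hK : HasExtensionProperty K)
    (hL : ∃ n : ℕ, derivedSet^[n] (Set.univ : Set L) = ∅) :
    ∃ P : C(K, ℝ) →L[ℝ] C(L, ℝ), ∀ f : C(L, ℝ), P (f.comp φ) = f := by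
  obtain ⟨n, hn⟩ := hL
  exact key n φ hφ hK hn
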